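/- Let a, b > 0 and let N ∈ ℕ with N ≥ 3. Define i_N = ⌊(N−3)·b²/(a²+b²) + 5/2⌋ and j_N = ⌈(N−3)·a²/(a²+b²) + 3/2⌉. Then i_N + j_N − 1 = N, and for every pair of integers (i, j) with i + j − 1 = N one has (i_N−2)²·a² + (j_N−2)²·b² ≤ (i−2)²·a² + (j−2)²·b². -/

import Mathlib

open Set

/-- Interior of the tile `T(k,l)` of the `a×b` grid. -/
noncomputable def tileInt (a b : ℝ) (k l : ℤ) : Set (ℝ × ℝ) :=
  Set.Ioo ((k : ℝ) * a) (((k : ℝ) + 1) * a) ×ˢ Set.Ioo ((l : ℝ) * b) (((l : ℝ) + 1) * b)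

/-- Number of tiles of the `a×b` grid visited by the closed segment with endpoints `p`, `q`. -/
noncomputable def visitCount (a b : ℝ) (p q : ℝ × ℝ) : ℕ :=
  Set.ncard {kl : ℤ × ℤ | (segment ℝ p q ∩ tileInt a b kl.1 kl.2).Nonempty}

/-- Normalized width of the discrete bounding rectangle of the segment with endpoints `p`, `q`. -/
noncomputable def normWidth (a : ℝ) (p q : ℝ × ℝ) : ℤ :=
  ⌈max p.1 q.1 / a⌉ - ⌊min p.1 q.1 / a⌋

/-- Normalized height of the discrete bounding rectangle of the segment with endpoints `p`, `q`. -/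
noncomputable def normHeight (b : ℝ) (p q : ℝ × ℝ) : ℤ :=
  ⌈max p.2 q.2 / b⌉ - ⌊min p.2 q.2 / b⌋

/-- Euclidean length of the segment with endpoints `p`, `q`. -/
noncomputable def segLen (p q : ℝ × ℝ) : ℝ :=
  Real.sqrt ((p.1 - q.1) ^ 2 + (p.2 - q.2) ^ 2)

/-- `maxTiles a b ℓ` : maximum number of tiles of the `a×b` grid visited by a segment of length `ℓ`. -/
noncomputable def maxTiles (a b ℓ : ℝ) : ℕ :=
  sSup {n : ℕ | ∃ p q : ℝ × ℝ, segLen p q = ℓ ∧ visitCount a b p q = n}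

/-- `infLen a b N` : infimum of lengths of segments visiting at least `N` tiles of the `a×b` grid. -/
noncomputable def infLen (a b : ℝ) (N : ℕ) : ℝ :=
  sInf {ℓ : ℝ | 0 < ℓ ∧ ∃ p q : ℝ × ℝ, segLen p q = ℓ ∧ N ≤ visitCount a b p q}

/-- `minIntLen N` : minimum positive integer length of a segment visiting at least `N` tiles
of the unit square grid. -/
noncomputable def minIntLen (N : ℕ) : ℕ :=
  sInf {L : ℕ | 1 ≤ L ∧ ∃ p q : ℝ × ℝ, segLen p q = (L : ℝ) ∧ N ≤ visitCount 1 1 p q}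

theorem stmt_5 (a b : ℝ) (ha : 0 < a) (hb : 0 < b) (N : ℕ) (hN : 3 ≤ N) :
    (⌊((N : ℝ) - 3) * b ^ 2 / (a ^ 2 + b ^ 2) + 5 / 2⌋ +
      ⌈((N : ℝ) - 3) * a ^ 2 / (a ^ 2 + b ^ 2) + 3 / 2⌉ - 1 = (N : ℤ)) ∧
    ∀ i j : ℤ, i + j - 1 = (N : ℤ) →
      ((⌊((N : ℝ) - 3) * b ^ 2 / (a ^ 2 + b ^ 2) + 5 / 2⌋ : ℝ) - 2) ^ 2 * a ^ 2 +
        ((⌈((N : ℝ) - 3) * a ^ 2 / (a ^ 2 + b ^ 2) + 3 / 2⌉ : ℝ) - 2) ^ 2 * b ^ 2 ≤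
      ((i : ℝ) - 2) ^ 2 * a ^ 2 + ((j : ℝ) - 2) ^ 2 * b ^ 2 := by
  have hc : (0:ℝ) < a ^ 2 + b ^ 2 := by positivity
  set M : ℝ := (N : ℝ) - 3 with hMdef
  set u : ℝ := M * b ^ 2 / (a ^ 2 + b ^ 2) with hudef
  have hu : u * (a ^ 2 + b ^ 2) = M * b ^ 2 := by
    rw [hudef, div_mul_cancel₀ _ hc.ne']
  have hsum : M * a ^ 2 / (a ^ 2 + b ^ 2) + 3 / 2 = -((u + 5 / 2) - ((N : ℤ) + 1 : ℤ)) := by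
    push_cast
    field_simp [hudef]
    linear_combination 2 * hu + 2 * (a ^ 2 + b ^ 2) * hMdef
  have hceil : ⌈M * a ^ 2 / (a ^ 2 + b ^ 2) + 3 / 2⌉ = (N : ℤ) + 1 - ⌊u + 5 / 2⌋ := by
    rw [hsum, Int.ceil_neg, Int.floor_sub_intCast]
    ring
  set m : ℤ := ⌊u + 1 / 2⌋ with hmdef
  have hfl : ⌊u + 5 / 2⌋ = m + 2 := by
    rw [show u + 5 / 2 = (u + 1 / 2) + ((2:ℤ):ℝ) by push_cast; ring, Int.floor_add_intCast]
  have key : ∀ n : ℤ, ((m : ℝ) - u) ^ 2 ≤ ((n : ℝ) - u) ^ 2 := by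
    intro n
    have h1 : (m : ℝ) ≤ u + 1 / 2 := Int.floor_le _
    have h2 : u + 1 / 2 < (m : ℝ) + 1 := Int.lt_floor_add_one _
    rcases lt_trichotomy n m with h | h | h
    · have : (n : ℝ) ≤ (m : ℝ) - 1 := by
        have : n ≤ m - 1 := by omega
        exact_mod_cast this
      nlinarith
    · rw [h]
    · have : (m : ℝ) + 1 ≤ (n : ℝ) := by
        have : m + 1 ≤ n := by omega
        exact_mod_cast this
      nlinarith
  refine ⟨by rw [hceil, hfl]; ring, ?_⟩
  intro i j hij
  rw [hceil, hfl]
  have hij' : (i : ℝ) + (j : ℝ) - 1 = (N : ℝ) := by exact_mod_cast hij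
  set X : ℝ := (m : ℝ) with hX
  set Y : ℝ := (i : ℝ) - 2 with hY
  have hXm : ((m + 2 : ℤ) : ℝ) - 2 = X := by push_cast; ring
  have hjm : (((N : ℤ) + 1 - (m + 2) : ℤ) : ℝ) - 2 = M - X := by push_cast [hMdef]; ring
  have hj2 : (j : ℝ) - 2 = M - Y := by rw [hMdef, hY]; linarith
  rw [hXm, hjm, hj2]
  have hkey : (X - u) ^ 2 ≤ (Y - u) ^ 2 := by
    have := key (i - 2)
    rw [hY]
    push_cast at this
    convert this using 2
  have heq : Y ^ 2 * a ^ 2 + (M - Y) ^ 2 * b ^ 2 - (X ^ 2 * a ^ 2 + (M - X) ^ 2 * b ^ 2) =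
      (a ^ 2 + b ^ 2) * ((Y - u) ^ 2 - (X - u) ^ 2) := by
    linear_combination (2 * (Y - X)) * hu
  nlinarith [mul_le_mul_of_nonneg_left hkey hc.le]
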